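/- Let N ≥ 1 and let ν > −N be a real number. Define the measure μ on ℝ^N by μ(E) = ∫_E ‖x‖^ν dx, i.e., μ is Lebesgue measure with density x ↦ ‖x‖^ν, where ‖·‖ is the Euclidean norm. Then μ is a doubling measure: there exists a constant C > 0 such that μ(B(x, 2r)) ≤ C · μ(B(x, r)) for every x ∈ ℝ^N and every r > 0, where B(x, r) denotes the open Euclidean ball of center x and radius r. -/

import Mathlib

open MeasureTheory Metric
open scoped ENNReal

private lemma pwd_meas (α : Type*) [MeasurableSpace α] [NormedAddCommGroup α]
    [OpensMeasurableSpace α] (ν : ℝ) :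
    Measurable fun y : α => ENNReal.ofReal (‖y‖ ^ ν) := by
  have hg : Measurable fun t : ℝ =>
      if t = 0 then (0:ℝ) ^ ν else Real.exp (Real.log t * ν) := by
    refine Measurable.ite ?_ measurable_const
      ((Real.measurable_log.mul measurable_const).exp)
    simp [Set.setOf_eq_eq_singleton]
  have : (fun y : α => ‖y‖ ^ ν) =
      (fun t : ℝ => if t = 0 then (0:ℝ) ^ ν else Real.exp (Real.log t * ν)) ∘ norm := by
    funext y
    by_cases h : ‖y‖ = 0
    · simp [h]
    · have hpos : 0 < ‖y‖ := lt_of_le_of_ne (norm_nonneg y) (Ne.symm h)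
      simp [h, Real.rpow_def_of_pos hpos]
  exact (this ▸ (hg.comp measurable_norm)).ennreal_ofReal

private lemma pwd_scale (N : ℕ) (ν : ℝ) {s : ℝ} (hs : 0 < s) :
    (volume.withDensity fun y : EuclideanSpace ℝ (Fin N) => ENNReal.ofReal (‖y‖ ^ ν))
        (ball 0 s) =
      ENNReal.ofReal (s ^ ((N : ℝ) + ν)) *
        (volume.withDensity fun y : EuclideanSpace ℝ (Fin N) => ENNReal.ofReal (‖y‖ ^ ν))
          (ball 0 1) := by
  set E := EuclideanSpace ℝ (Fin N)
  set f : E → ℝ≥0∞ := fun y => ENNReal.ofReal (‖y‖ ^ ν) with hf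
  have hfm : Measurable f := pwd_meas E ν
  have hmap := Measure.map_addHaar_smul (volume : Measure E) hs.ne'
  rw [finrank_euclideanSpace_fin] at hmap
  have h1 : ∫⁻ z, (ball (0:E) s).indicator f (s • z) ∂volume
      = ENNReal.ofReal |(s ^ N)⁻¹| * ∫⁻ y in ball (0:E) s, f y ∂volume := by
    rw [← lintegral_map (hfm.indicator measurableSet_ball) (measurable_const_smul s), hmap,
      lintegral_smul_measure, lintegral_indicator measurableSet_ball, smul_eq_mul]
  have h2 : ∀ z : E, (ball (0:E) s).indicator f (s • z)
      = ENNReal.ofReal (s ^ ν) * (ball (0:E) 1).indicator f z := by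
    intro z
    have hmem : s • z ∈ ball (0:E) s ↔ z ∈ ball (0:E) 1 := by
      rw [mem_ball_zero_iff, mem_ball_zero_iff, norm_smul, Real.norm_eq_abs, abs_of_pos hs]
      constructor
      · intro h; nlinarith [norm_nonneg z]
      · intro h; nlinarith [norm_nonneg z]
    by_cases hz : z ∈ ball (0:E) 1
    · rw [Set.indicator_of_mem (hmem.2 hz), Set.indicator_of_mem hz, hf]
      simp only
      rw [norm_smul, Real.norm_eq_abs, abs_of_pos hs,
        Real.mul_rpow hs.le (norm_nonneg _),
        ENNReal.ofReal_mul (Real.rpow_nonneg hs.le _)]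
    · rw [Set.indicator_of_notMem (fun h => hz (hmem.1 h)), Set.indicator_of_notMem hz,
        mul_zero]
  have hmain : ENNReal.ofReal |(s ^ N)⁻¹| * ∫⁻ y in ball (0:E) s, f y ∂volume
      = ENNReal.ofReal (s ^ ν) * ∫⁻ y in ball (0:E) 1, f y ∂volume := by
    rw [← h1]
    simp_rw [h2]
    rw [lintegral_const_mul _ (hfm.indicator measurableSet_ball),
      lintegral_indicator measurableSet_ball]
  have hsN : (0:ℝ) < s ^ N := pow_pos hs N
  have hcanc : ENNReal.ofReal (s ^ N) * ENNReal.ofReal |(s ^ N)⁻¹| = 1 := by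
    rw [abs_of_pos (inv_pos.2 hsN), ← ENNReal.ofReal_mul hsN.le, mul_inv_cancel₀ hsN.ne',
      ENNReal.ofReal_one]
  rw [withDensity_apply _ measurableSet_ball, withDensity_apply _ measurableSet_ball]
  calc ∫⁻ y in ball (0:E) s, f y ∂volume
      = (ENNReal.ofReal (s ^ N) * ENNReal.ofReal |(s ^ N)⁻¹|) *
          ∫⁻ y in ball (0:E) s, f y ∂volume := by rw [hcanc, one_mul]
    _ = ENNReal.ofReal (s ^ N) * (ENNReal.ofReal |(s ^ N)⁻¹| *
          ∫⁻ y in ball (0:E) s, f y ∂volume) := by ring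
    _ = ENNReal.ofReal (s ^ N) * (ENNReal.ofReal (s ^ ν) *
          ∫⁻ y in ball (0:E) 1, f y ∂volume) := by rw [hmain]
    _ = ENNReal.ofReal (s ^ ((N:ℝ) + ν)) * ∫⁻ y in ball (0:E) 1, f y ∂volume := by
        rw [← mul_assoc, ← ENNReal.ofReal_mul (pow_nonneg hs.le N),
          Real.rpow_add hs, Real.rpow_natCast]

private lemma pwd_rpow_bounds {a b t ν : ℝ} (ha : 0 < a) (hat : a ≤ t) (htb : t ≤ b) :
    min (a ^ ν) (b ^ ν) ≤ t ^ ν ∧ t ^ ν ≤ max (a ^ ν) (b ^ ν) := by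
  rcases le_or_gt 0 ν with h | h
  · exact ⟨(min_le_left _ _).trans (Real.rpow_le_rpow ha.le hat h),
      le_max_of_le_right (Real.rpow_le_rpow (ha.le.trans hat) htb h)⟩
  · exact ⟨(min_le_right _ _).trans (Real.rpow_le_rpow_of_nonpos (ha.trans_le hat) htb h.le),
      le_max_of_le_left (Real.rpow_le_rpow_of_nonpos ha hat h.le)⟩

private lemma pwd_finite (N : ℕ) (hN : 1 ≤ N) (ν : ℝ) (hν : -(N : ℝ) < ν)
    (_hfm : Measurable fun y : EuclideanSpace ℝ (Fin N) => ENNReal.ofReal (‖y‖ ^ ν)) :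
    (volume.withDensity fun y : EuclideanSpace ℝ (Fin N) => ENNReal.ofReal (‖y‖ ^ ν))
      (ball 0 1) < ⊤ := by
  set E := EuclideanSpace ℝ (Fin N)
  set f : E → ℝ≥0∞ := fun y => ENNReal.ofReal (‖y‖ ^ ν) with hf
  set μ : Measure E := volume.withDensity f with hμ
  haveI : Nontrivial E := by
    have h1 : ‖EuclideanSpace.single (⟨0, hN⟩ : Fin N) (1:ℝ)‖ = 1 := by
      rw [EuclideanSpace.norm_single]; exact norm_one
    refine ⟨EuclideanSpace.single (⟨0, hN⟩ : Fin N) (1:ℝ), 0, fun h => ?_⟩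
    rw [h, norm_zero] at h1
    exact one_ne_zero h1.symm
  have hfinrank : Module.finrank ℝ E = N := finrank_euclideanSpace_fin
  set v₁ : ℝ≥0∞ := volume (ball (0:E) 1) with hv₁
  have hv₁top : v₁ ≠ ⊤ := measure_ball_lt_top.ne
  set ρ₀ : ℝ := (1/2 : ℝ) ^ ν with hρ₀
  set ρ : ℝ := (1/2 : ℝ) ^ (ν + (N:ℝ)) with hρ
  have hρ₀pos : 0 < ρ₀ := Real.rpow_pos_of_pos (by norm_num) ν
  have hρpos : 0 < ρ := Real.rpow_pos_of_pos (by norm_num) _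
  have hρlt1 : ρ < 1 := Real.rpow_lt_one (by norm_num) (by norm_num) (by linarith)
  set M₀ : ℝ := max ρ₀ 1 with hM₀
  have hM₀nonneg : 0 ≤ M₀ := le_max_right _ _ |>.trans' zero_le_one |>.trans (le_refl _)
  -- dyadic pieces
  set D : ℕ → Set E := fun k =>
    closedBall (0:E) ((1/2:ℝ)^k) \ ball (0:E) ((1/2:ℝ)^(k+1)) with hD
  have hDmeas : ∀ k, MeasurableSet (D k) :=
    fun k => measurableSet_closedBall.diff measurableSet_ball
  -- covering
  have hcover : ball (0:E) 1 ⊆ {0} ∪ ⋃ k, D k := by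
    intro y hy
    rcases eq_or_ne y 0 with rfl | hy0
    · exact Or.inl rfl
    right
    have hy1 : ‖y‖ < 1 := mem_ball_zero_iff.1 hy
    have hy0' : 0 < ‖y‖ := norm_pos_iff.2 hy0
    have hex : ∃ n, (1/2:ℝ)^n < ‖y‖ := exists_pow_lt_of_lt_one hy0' (by norm_num)
    have hn := Nat.find_spec hex
    have hnpos : Nat.find hex ≠ 0 := by
      intro h
      rw [h, pow_zero] at hn
      exact absurd hn (not_lt.2 hy1.le)
    obtain ⟨k, hk⟩ := Nat.exists_eq_succ_of_ne_zero hnpos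
    have hk2 : ¬((1/2:ℝ)^k < ‖y‖) := Nat.find_min hex (by omega)
    refine Set.mem_iUnion.2 ⟨k, mem_closedBall_zero_iff.2 (not_lt.1 hk2), fun h => ?_⟩
    rw [hk] at hn
    exact absurd (mem_ball_zero_iff.1 h) (not_lt.2 hn.le)
  -- pow/rpow bridge
  have hpowbridge : ∀ m : ℕ, ((1/2:ℝ)^m) ^ ν = ρ₀ ^ m := by
    intro m
    rw [hρ₀, ← Real.rpow_natCast (1/2:ℝ) m, ← Real.rpow_natCast ((1/2:ℝ) ^ ν) m,
      ← Real.rpow_mul (by norm_num), ← Real.rpow_mul (by norm_num), mul_comm]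
  -- measure of each piece
  have hDk : ∀ k, μ (D k) ≤ (ENNReal.ofReal M₀ * v₁) * (ENNReal.ofReal ρ) ^ k := by
    intro k
    have hbound : ∀ y ∈ D k, ‖y‖ ^ ν ≤ M₀ * ρ₀ ^ k := by
      intro y hy
      obtain ⟨hy1, hy2⟩ := hy
      have h1 : ‖y‖ ≤ (1/2:ℝ)^k := mem_closedBall_zero_iff.1 hy1
      have h2 : (1/2:ℝ)^(k+1) ≤ ‖y‖ := not_lt.1 (fun h => hy2 (mem_ball_zero_iff.2 h))
      have := (pwd_rpow_bounds (ν := ν) (by positivity) h2 h1).2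
      calc ‖y‖ ^ ν ≤ max (((1/2:ℝ)^(k+1)) ^ ν) (((1/2:ℝ)^k) ^ ν) := this
        _ = max (ρ₀ ^ (k+1)) (ρ₀ ^ k) := by rw [hpowbridge, hpowbridge]
        _ = ρ₀ ^ k * max ρ₀ 1 := by
            rw [mul_max_of_nonneg _ _ (by positivity : (0:ℝ) ≤ ρ₀ ^ k), mul_one, pow_succ]
        _ = M₀ * ρ₀ ^ k := by rw [hM₀, mul_comm]
    have hμDk : μ (D k) ≤ ENNReal.ofReal (M₀ * ρ₀ ^ k) * volume (D k) := by
      rw [hμ, withDensity_apply _ (hDmeas k)]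
      calc ∫⁻ y in D k, f y ∂volume
          ≤ ∫⁻ _ in D k, ENNReal.ofReal (M₀ * ρ₀ ^ k) ∂volume :=
            setLIntegral_mono' (hDmeas k) fun y hy =>
              ENNReal.ofReal_le_ofReal (hbound y hy)
        _ = ENNReal.ofReal (M₀ * ρ₀ ^ k) * volume (D k) := setLIntegral_const _ _
    have hvolDk : volume (D k) ≤ ENNReal.ofReal (((1/2:ℝ)^k) ^ N) * v₁ := by
      calc volume (D k) ≤ volume (closedBall (0:E) ((1/2:ℝ)^k)) :=
            measure_mono Set.diff_subset
        _ = ENNReal.ofReal (((1/2:ℝ)^k) ^ N) * v₁ := by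
            rw [Measure.addHaar_closedBall volume _ (by positivity), hfinrank]
    calc μ (D k) ≤ ENNReal.ofReal (M₀ * ρ₀ ^ k) * (ENNReal.ofReal (((1/2:ℝ)^k) ^ N) * v₁) :=
          hμDk.trans (mul_le_mul_right hvolDk _)
      _ = ENNReal.ofReal (M₀ * (ρ₀ ^ k * ((1/2:ℝ)^k) ^ N)) * v₁ := by
          rw [ENNReal.ofReal_mul (by positivity), ENNReal.ofReal_mul hM₀nonneg,
            ENNReal.ofReal_mul (by positivity : (0:ℝ) ≤ ρ₀ ^ k)]
          ring
      _ = (ENNReal.ofReal M₀ * v₁) * (ENNReal.ofReal ρ) ^ k := by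
          have : ρ₀ ^ k * ((1/2:ℝ)^k) ^ N = ρ ^ k := by
            rw [← pow_mul, mul_comm k N, pow_mul, ← mul_pow]
            congr 1
            rw [hρ, Real.rpow_add (by norm_num), hρ₀, Real.rpow_natCast]
          rw [this, ENNReal.ofReal_mul hM₀nonneg, ENNReal.ofReal_pow hρpos.le]
          ring
  -- zero has measure zero
  have h0 : μ ({0} : Set E) = 0 := by
    have hvol0 : volume ({0} : Set E) = 0 := by
      have h := Measure.addHaar_closedBall (volume : Measure E) (0:E) (le_refl (0:ℝ))
      rw [closedBall_zero, hfinrank, zero_pow (by omega : N ≠ 0), ENNReal.ofReal_zero,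
        zero_mul] at h
      exact h
    rw [hμ, withDensity_apply _ (measurableSet_singleton _), Measure.restrict_eq_zero.2 hvol0,
      lintegral_zero_measure]
  -- sum up
  have hofρ : ENNReal.ofReal ρ < 1 := ENNReal.ofReal_lt_one.2 hρlt1
  calc μ (ball (0:E) 1) ≤ μ ({0} ∪ ⋃ k, D k) := measure_mono hcover
    _ ≤ μ ({0} : Set E) + μ (⋃ k, D k) := measure_union_le _ _
    _ ≤ 0 + ∑' k, μ (D k) := by
        rw [h0]
        exact add_le_add_right (measure_iUnion_le D) 0
    _ ≤ ∑' k, (ENNReal.ofReal M₀ * v₁) * (ENNReal.ofReal ρ) ^ k := by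
        rw [zero_add]
        exact ENNReal.tsum_le_tsum hDk
    _ = (ENNReal.ofReal M₀ * v₁) * (1 - ENNReal.ofReal ρ)⁻¹ := by
        rw [ENNReal.tsum_mul_left, ENNReal.tsum_geometric]
    _ < ⊤ := by
        apply ENNReal.mul_lt_top
        · exact ENNReal.mul_lt_top ENNReal.ofReal_lt_top hv₁top.lt_top
        · rw [ENNReal.inv_lt_top, tsub_pos_iff_lt]
          exact hofρ

/-- For `ν > -N`, the measure `dμ = ‖x‖^ν dx` on `ℝ^N` is doubling. -/
theorem power_weight_doubling
    (N : ℕ) (hN : 1 ≤ N) (ν : ℝ) (hν : -(N : ℝ) < ν) :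
    ∃ C : NNReal, 0 < C ∧
      ∀ (x : EuclideanSpace ℝ (Fin N)) (r : ℝ), 0 < r →
        (volume.withDensity fun y : EuclideanSpace ℝ (Fin N) => ENNReal.ofReal (‖y‖ ^ ν))
            (ball x (2 * r)) ≤
          C * (volume.withDensity fun y : EuclideanSpace ℝ (Fin N) =>
            ENNReal.ofReal (‖y‖ ^ ν)) (ball x r) := by
  classical
  set E := EuclideanSpace ℝ (Fin N) with hE
  set f : E → ℝ≥0∞ := fun y => ENNReal.ofReal (‖y‖ ^ ν) with hf
  set μ : Measure E := volume.withDensity f with hμ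
  haveI : Nontrivial E := by
    have h1 : ‖EuclideanSpace.single (⟨0, hN⟩ : Fin N) (1:ℝ)‖ = 1 := by
      rw [EuclideanSpace.norm_single]; exact norm_one
    refine ⟨EuclideanSpace.single (⟨0, hN⟩ : Fin N) (1:ℝ), 0, fun h => ?_⟩
    rw [h, norm_zero] at h1
    exact one_ne_zero h1.symm
  have hfinrank : Module.finrank ℝ E = N := finrank_euclideanSpace_fin
  set v₁ : ℝ≥0∞ := volume (ball (0:E) 1) with hv₁
  have hv₁0 : v₁ ≠ 0 := (measure_ball_pos volume (0:E) one_pos).ne'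
  have hv₁top : v₁ ≠ ⊤ := measure_ball_lt_top.ne
  set I₁ : ℝ≥0∞ := μ (ball (0:E) 1) with hI₁def
  have hI₁top : I₁ ≠ ⊤ := (pwd_finite N hN ν hν (pwd_meas E ν)).ne
  -- real constants
  set mA : ℝ := min ((1/2:ℝ) ^ ν) ((5:ℝ) ^ ν) with hmA
  have hmApos : 0 < mA :=
    lt_min (Real.rpow_pos_of_pos (by norm_num) ν) (Real.rpow_pos_of_pos (by norm_num) ν)
  set MB : ℝ := max ((1/2:ℝ) ^ ν) ((3/2:ℝ) ^ ν) with hMB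
  have hMBpos : 0 < MB := lt_max_of_lt_left (Real.rpow_pos_of_pos (by norm_num) ν)
  set mB : ℝ := min ((3/4:ℝ) ^ ν) ((5/4:ℝ) ^ ν) with hmB
  have hmBpos : 0 < mB :=
    lt_min (Real.rpow_pos_of_pos (by norm_num) ν) (Real.rpow_pos_of_pos (by norm_num) ν)
  set KA : ℝ≥0∞ :=
    ENNReal.ofReal ((6:ℝ) ^ ((N:ℝ) + ν) * (((1/4:ℝ)) ^ N * mA)⁻¹) * I₁ * v₁⁻¹ with hKA
  set KB : ℝ≥0∞ := ENNReal.ofReal ((2:ℝ) ^ N * MB * mB⁻¹) with hKB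
  set K : ℝ≥0∞ := KA ⊔ KB with hK
  have hKtop : K ≠ ⊤ := by
    rw [hK]
    refine (max_lt ?_ ?_).ne
    · exact ENNReal.mul_lt_top
        (ENNReal.mul_lt_top ENNReal.ofReal_lt_top hI₁top.lt_top)
        (ENNReal.inv_lt_top.2 (pos_iff_ne_zero.2 hv₁0))
    · exact ENNReal.ofReal_lt_top
  refine ⟨K.toNNReal + 1, lt_of_lt_of_le one_pos le_add_self, ?_⟩
  intro x r hr
  suffices h : μ (ball x (2 * r)) ≤ K * μ (ball x r) by
    refine h.trans (mul_le_mul_left ?_ _)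
    calc K = (K.toNNReal : ℝ≥0∞) := (ENNReal.coe_toNNReal hKtop).symm
      _ ≤ ((K.toNNReal + 1 : NNReal) : ℝ≥0∞) := by
          exact_mod_cast (le_self_add : K.toNNReal ≤ K.toNNReal + 1)
  -- ball volume formula
  have hballvol : ∀ (c : E) {s : ℝ}, 0 ≤ s →
      volume (ball c s) = ENNReal.ofReal (s ^ N) * v₁ := by
    intro c s hs
    rw [Measure.addHaar_ball volume c hs, hfinrank, hv₁]
  -- upper density bound
  have hup : ∀ (s : Set E), MeasurableSet s → ∀ c : ℝ, (∀ y ∈ s, ‖y‖ ^ ν ≤ c) →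
      μ s ≤ ENNReal.ofReal c * volume s := by
    intro s hs c hc
    rw [hμ, withDensity_apply _ hs]
    calc ∫⁻ y in s, f y ∂volume ≤ ∫⁻ _ in s, ENNReal.ofReal c ∂volume :=
          setLIntegral_mono' hs fun y hy => ENNReal.ofReal_le_ofReal (hc y hy)
      _ = ENNReal.ofReal c * volume s := setLIntegral_const _ _
  -- lower density bound
  have hlo : ∀ (s : Set E), MeasurableSet s → ∀ c : ℝ, (∀ y ∈ s, c ≤ ‖y‖ ^ ν) →
      ENNReal.ofReal c * volume s ≤ μ s := by
    intro s hs c hc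
    rw [hμ, withDensity_apply _ hs]
    calc ENNReal.ofReal c * volume s = ∫⁻ _ in s, ENNReal.ofReal c ∂volume :=
          (setLIntegral_const _ _).symm
      _ ≤ ∫⁻ y in s, f y ∂volume :=
          setLIntegral_mono' hs fun y hy => ENNReal.ofReal_le_ofReal (hc y hy)
  rcases le_total ‖x‖ (4 * r) with hx | hx
  · -- Case A : ‖x‖ ≤ 4r
    -- upper bound
    have hsub : ball x (2 * r) ⊆ ball (0:E) (6 * r) := by
      intro y hy
      rw [mem_ball] at hy ⊢
      have h1 : dist y 0 ≤ dist y x + dist x 0 := dist_triangle _ _ _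
      simp only [dist_zero_right] at h1 ⊢
      linarith
    have hupA : μ (ball x (2 * r)) ≤ ENNReal.ofReal ((6 * r) ^ ((N:ℝ) + ν)) * I₁ := by
      refine (measure_mono hsub).trans_eq ?_
      rw [hμ, hf, hI₁def, hμ, hf]
      exact pwd_scale N ν (by linarith)
    -- lower bound : find point z
    set e : E := EuclideanSpace.single (⟨0, hN⟩ : Fin N) (1:ℝ) with he
    have hene : ‖e‖ = 1 := by rw [he, EuclideanSpace.norm_single]; exact norm_one
    set c : ℝ := 3/4 * r with hc
    have hcpos : 0 < c := by rw [hc]; linarith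
    obtain ⟨z, hz1, hz2⟩ : ∃ z : E, ‖z - x‖ = c ∧ c ≤ ‖z‖ := by
      rcases le_total c ‖x + c • e‖ with h | h
      · refine ⟨x + c • e, ?_, h⟩
        rw [add_sub_cancel_left, norm_smul, Real.norm_eq_abs, abs_of_pos hcpos, hene, mul_one]
      · refine ⟨x - c • e, ?_, ?_⟩
        · rw [sub_sub_cancel_left, norm_neg, norm_smul, Real.norm_eq_abs,
            abs_of_pos hcpos, hene, mul_one]
        · have h2c : (x + c • e) - (x - c • e) = (2 * c) • e := by
            rw [two_mul, add_smul]; abel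
          have h3 : ‖(x + c • e) - (x - c • e)‖ = 2 * c := by
            rw [h2c, norm_smul, Real.norm_eq_abs, abs_of_pos (by linarith), hene, mul_one]
          have h4 : ‖(x + c • e) - (x - c • e)‖ ≤ ‖x + c • e‖ + ‖x - c • e‖ :=
            norm_sub_le _ _
          linarith
    have hzx : ‖z‖ ≤ ‖x‖ + c := by
      calc ‖z‖ = ‖x + (z - x)‖ := by rw [add_sub_cancel]
        _ ≤ ‖x‖ + ‖z - x‖ := norm_add_le _ _
        _ = ‖x‖ + c := by rw [hz1]
    have hsub2 : ball z (r/4) ⊆ ball x r := by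
      intro y hy
      rw [mem_ball] at hy ⊢
      have h1 : dist y x ≤ dist y z + dist z x := dist_triangle _ _ _
      have h2 : dist z x = c := by rw [dist_eq_norm, hz1]
      rw [hc] at h2
      linarith [h2 ▸ h1]
    have hdens : ∀ y ∈ ball z (r/4), r ^ ν * mA ≤ ‖y‖ ^ ν := by
      intro y hy
      rw [mem_ball, dist_eq_norm] at hy
      have habs : |‖y‖ - ‖z‖| < r/4 := lt_of_le_of_lt (abs_norm_sub_norm_le y z) hy
      have hneg := neg_abs_le (‖y‖ - ‖z‖)
      have habs2 := le_abs_self (‖y‖ - ‖z‖)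
      have hz2' : 3/4 * r ≤ ‖z‖ := by rw [hc] at hz2; linarith
      have hyn1 : r/2 ≤ ‖y‖ := by linarith
      have hyn2 : ‖y‖ ≤ 5 * r := by
        have h5 : ‖y‖ ≤ ‖z‖ + ‖y - z‖ := by
          calc ‖y‖ = ‖z + (y - z)‖ := by rw [add_sub_cancel]
            _ ≤ ‖z‖ + ‖y - z‖ := norm_add_le _ _
        rw [hc] at hzx
        linarith
      have hb := (pwd_rpow_bounds (ν := ν) (by linarith : (0:ℝ) < r/2) hyn1 hyn2).1
      refine le_trans ?_ hb
      have e1 : (r/2 : ℝ) ^ ν = r ^ ν * (1/2:ℝ) ^ ν := by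
        rw [show (r/2 : ℝ) = r * (1/2) by ring, Real.mul_rpow hr.le (by norm_num)]
      have e2 : (5 * r : ℝ) ^ ν = r ^ ν * (5:ℝ) ^ ν := by
        rw [show (5 * r : ℝ) = r * 5 by ring, Real.mul_rpow hr.le (by norm_num)]
      rw [e1, e2, hmA, ← mul_min_of_nonneg _ _ (Real.rpow_nonneg hr.le ν)]
    have hloA : ENNReal.ofReal (r ^ ν * mA) * (ENNReal.ofReal ((r/4) ^ N) * v₁)
        ≤ μ (ball x r) := by
      have h1 := hlo (ball z (r/4)) measurableSet_ball (r ^ ν * mA) hdens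
      rw [hballvol z (by linarith : (0:ℝ) ≤ r/4)] at h1
      exact h1.trans (measure_mono hsub2)
    -- combine
    have hid : ENNReal.ofReal ((6 * r) ^ ((N:ℝ) + ν)) =
        ENNReal.ofReal ((6:ℝ) ^ ((N:ℝ) + ν) * (((1/4:ℝ)) ^ N * mA)⁻¹) *
          ENNReal.ofReal (r ^ ν * mA * (r/4) ^ N) := by
      rw [← ENNReal.ofReal_mul (by positivity)]
      congr 1
      have h4N : ((4:ℝ)) ^ N ≠ 0 := by positivity
      have h1 : (6 * r : ℝ) ^ ((N:ℝ) + ν) = 6 ^ ((N:ℝ) + ν) * (r ^ (N:ℕ) * r ^ ν) := by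
        rw [Real.mul_rpow (by norm_num) hr.le, Real.rpow_add hr, Real.rpow_natCast]
      have h2 : ((1/4:ℝ)) ^ N = 1 / 4 ^ N := by rw [div_pow, one_pow]
      have h3 : ((r/4:ℝ)) ^ N = r ^ N / 4 ^ N := div_pow r 4 N
      rw [h1, h2, h3]
      field_simp
    calc μ (ball x (2 * r)) ≤ ENNReal.ofReal ((6 * r) ^ ((N:ℝ) + ν)) * I₁ := hupA
      _ = KA * (ENNReal.ofReal (r ^ ν * mA) * (ENNReal.ofReal ((r/4) ^ N) * v₁)) := by
          rw [hid, hKA]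
          rw [ENNReal.ofReal_mul (by positivity : (0:ℝ) ≤ r ^ ν * mA)]
          have hfactor : ∀ (A B C I v : ℝ≥0∞), v⁻¹ * v = 1 →
              A * (B * C) * I = A * I * v⁻¹ * (B * (C * v)) := by
            intro A B C I v hv
            calc A * (B * C) * I = A * (B * C) * I * (v⁻¹ * v) := by rw [hv, mul_one]
              _ = A * I * v⁻¹ * (B * (C * v)) := by ring
          exact hfactor _ _ _ _ _ (ENNReal.inv_mul_cancel hv₁0 hv₁top)
      _ ≤ KA * μ (ball x r) := mul_le_mul_right hloA _
      _ ≤ K * μ (ball x r) := mul_le_mul_left le_sup_left _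
  · -- Case B : 4r ≤ ‖x‖
    have hx0 : 0 < ‖x‖ := lt_of_lt_of_le (by linarith) hx
    have hupB : ∀ y ∈ ball x (2 * r), ‖y‖ ^ ν ≤ ‖x‖ ^ ν * MB := by
      intro y hy
      rw [mem_ball, dist_eq_norm] at hy
      have hyn1 : ‖x‖/2 ≤ ‖y‖ := by
        have := abs_norm_sub_norm_le y x
        have h1 : |‖y‖ - ‖x‖| < 2 * r := lt_of_le_of_lt this hy
        have h2 := neg_abs_le (‖y‖ - ‖x‖)
        linarith
      have hyn2 : ‖y‖ ≤ 3/2 * ‖x‖ := by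
        have h1 : |‖y‖ - ‖x‖| < 2 * r := lt_of_le_of_lt (abs_norm_sub_norm_le y x) hy
        have h2 := le_abs_self (‖y‖ - ‖x‖)
        linarith
      have hb := (pwd_rpow_bounds (ν := ν) (by linarith : (0:ℝ) < ‖x‖/2) hyn1 hyn2).2
      refine hb.trans ?_
      have e1 : (‖x‖/2 : ℝ) ^ ν = ‖x‖ ^ ν * (1/2:ℝ) ^ ν := by
        rw [show (‖x‖/2 : ℝ) = ‖x‖ * (1/2) by ring, Real.mul_rpow hx0.le (by norm_num)]
      have e2 : (3/2 * ‖x‖ : ℝ) ^ ν = ‖x‖ ^ ν * (3/2:ℝ) ^ ν := by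
        rw [show (3/2 * ‖x‖ : ℝ) = ‖x‖ * (3/2) by ring, Real.mul_rpow hx0.le (by norm_num)]
      rw [e1, e2, hMB, ← mul_max_of_nonneg _ _ (Real.rpow_nonneg hx0.le ν)]
    have hloB : ∀ y ∈ ball x r, ‖x‖ ^ ν * mB ≤ ‖y‖ ^ ν := by
      intro y hy
      rw [mem_ball, dist_eq_norm] at hy
      have h1 : |‖y‖ - ‖x‖| < r := lt_of_le_of_lt (abs_norm_sub_norm_le y x) hy
      have h2 := neg_abs_le (‖y‖ - ‖x‖)
      have h3 := le_abs_self (‖y‖ - ‖x‖)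
      have hyn1 : 3/4 * ‖x‖ ≤ ‖y‖ := by linarith
      have hyn2 : ‖y‖ ≤ 5/4 * ‖x‖ := by linarith
      have hb := (pwd_rpow_bounds (ν := ν) (by linarith : (0:ℝ) < 3/4 * ‖x‖) hyn1 hyn2).1
      refine le_trans ?_ hb
      have e1 : (3/4 * ‖x‖ : ℝ) ^ ν = ‖x‖ ^ ν * (3/4:ℝ) ^ ν := by
        rw [show (3/4 * ‖x‖ : ℝ) = ‖x‖ * (3/4) by ring, Real.mul_rpow hx0.le (by norm_num)]
      have e2 : (5/4 * ‖x‖ : ℝ) ^ ν = ‖x‖ ^ ν * (5/4:ℝ) ^ ν := by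
        rw [show (5/4 * ‖x‖ : ℝ) = ‖x‖ * (5/4) by ring, Real.mul_rpow hx0.le (by norm_num)]
      rw [e1, e2, hmB, ← mul_min_of_nonneg _ _ (Real.rpow_nonneg hx0.le ν)]
    have hup2 : μ (ball x (2 * r)) ≤
        ENNReal.ofReal (‖x‖ ^ ν * MB) * (ENNReal.ofReal ((2 * r) ^ N) * v₁) := by
      have h1 := hup (ball x (2 * r)) measurableSet_ball (‖x‖ ^ ν * MB) hupB
      rw [hballvol x (by linarith : (0:ℝ) ≤ 2 * r)] at h1
      exact h1
    have hlo2 : ENNReal.ofReal (‖x‖ ^ ν * mB) * (ENNReal.ofReal (r ^ N) * v₁)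
        ≤ μ (ball x r) := by
      have h1 := hlo (ball x r) measurableSet_ball (‖x‖ ^ ν * mB) hloB
      rw [hballvol x hr.le] at h1
      exact h1
    have hid : ENNReal.ofReal (‖x‖ ^ ν * MB) * ENNReal.ofReal ((2 * r) ^ N) =
        KB * (ENNReal.ofReal (‖x‖ ^ ν * mB) * ENNReal.ofReal (r ^ N)) := by
      rw [hKB, ← ENNReal.ofReal_mul (by positivity), ← ENNReal.ofReal_mul (by positivity),
        ← ENNReal.ofReal_mul (by positivity)]
      congr 1
      rw [mul_pow]
      field_simp
    calc μ (ball x (2 * r))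
        ≤ ENNReal.ofReal (‖x‖ ^ ν * MB) * (ENNReal.ofReal ((2 * r) ^ N) * v₁) := hup2
      _ = (ENNReal.ofReal (‖x‖ ^ ν * MB) * ENNReal.ofReal ((2 * r) ^ N)) * v₁ := by ring
      _ = KB * (ENNReal.ofReal (‖x‖ ^ ν * mB) * ENNReal.ofReal (r ^ N)) * v₁ := by rw [hid]
      _ = KB * (ENNReal.ofReal (‖x‖ ^ ν * mB) * (ENNReal.ofReal (r ^ N) * v₁)) := by ring
      _ ≤ KB * μ (ball x r) := mul_le_mul_right hlo2 _
      _ ≤ K * μ (ball x r) := mul_le_mul_left le_sup_right _
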